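/- Let π ∈ ℝ^n have positive entries with ∑_j π_j ≤ 1, and let 1 ≤ k ≤ n. Among all probability vectors α ∈ ℝ^n with nonnegative entries, support of size at most k, and ∑_j α_j = 1, the minimum of KL(α‖π) = ∑_{j: α_j>0} α_j log(α_j/π_j) is attained by choosing T to be a set of indices of the k largest entries of π and setting α_j = π_j / (∑_{l∈T} π_l) for j ∈ T and α_j = 0 otherwise; the minimal value equals −log(∑_{j∈T} π_j). -/

import Mathlib

open Finset Real

/-- If `B` has at most as many elements as `T`, and every entry of `p` inside `T`
dominates every entry outside `T`, then the sum of `p` over `B` is at most over `T`. -/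
lemma sum_le_sum_top {n : ℕ} (p : Fin n → ℝ) (hp : ∀ j, 0 < p j)
    (T B : Finset (Fin n)) (hcard : B.card ≤ T.card)
    (hTtop : ∀ j ∈ T, ∀ j' ∉ T, p j' ≤ p j) :
    ∑ j ∈ B, p j ≤ ∑ j ∈ T, p j := by
  have h1 : (B \ T).card ≤ (T \ B).card := by
    have hB := Finset.card_sdiff_add_card_inter B T
    have hT := Finset.card_sdiff_add_card_inter T B
    rw [Finset.inter_comm] at hT
    omega
  have key : ∑ j ∈ B \ T, p j ≤ ∑ j ∈ T \ B, p j := by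
    rcases Finset.eq_empty_or_nonempty (B \ T) with h | h
    · rw [h, Finset.sum_empty]
      exact Finset.sum_nonneg fun j _ => (hp j).le
    · have hTBne : (T \ B).Nonempty := by
        rw [← Finset.card_pos] at h ⊢; omega
      obtain ⟨j0, hj0, hj0min⟩ := Finset.exists_min_image (T \ B) p hTBne
      have hj0T : j0 ∈ T := (Finset.mem_sdiff.mp hj0).1
      calc ∑ j ∈ B \ T, p j ≤ (B \ T).card • p j0 :=
            Finset.sum_le_card_nsmul _ _ _ fun j hj =>
              hTtop j0 hj0T j (Finset.mem_sdiff.mp hj).2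
        _ ≤ (T \ B).card • p j0 := by
            exact nsmul_le_nsmul_left (hp j0).le h1
        _ ≤ ∑ j ∈ T \ B, p j := Finset.card_nsmul_le_sum _ _ _ hj0min
  have hB := Finset.sum_inter_add_sum_sdiff B T p
  have hT := Finset.sum_inter_add_sum_sdiff T B p
  rw [Finset.inter_comm] at hT
  linarith

/-- Gibbs-type inequality: KL of a probability vector supported on `B`
against positive `p` is at least `-log (∑_{B} p)`. -/
lemma gibbs_lower {n : ℕ} (p : Fin n → ℝ) (hp : ∀ j, 0 < p j)
    (B : Finset (Fin n)) (β : Fin n → ℝ) (hβ : ∀ j ∈ B, 0 < β j)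
    (hsum : ∑ j ∈ B, β j = 1) :
    - Real.log (∑ j ∈ B, p j) ≤ ∑ j ∈ B, β j * Real.log (β j / p j) := by
  have jensen := strictConcaveOn_log_Ioi.concaveOn.le_map_sum
    (t := B) (w := β) (p := fun j => p j / β j)
    (fun j hj => (hβ j hj).le) hsum
    (fun j hj => Set.mem_Ioi.mpr (div_pos (hp j) (hβ j hj)))
  have hpt : ∀ j ∈ B, β j • (p j / β j) = p j := fun j hj => by
    rw [smul_eq_mul]; field_simp [(hβ j hj).ne']
  rw [Finset.sum_congr rfl hpt] at jensen
  have hneg : ∀ j ∈ B, β j • Real.log (p j / β j) = -(β j * Real.log (β j / p j)) := by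
    intro j hj
    rw [smul_eq_mul, Real.log_div (hp j).ne' (hβ j hj).ne',
      Real.log_div (hβ j hj).ne' (hp j).ne']
    ring
  rw [Finset.sum_congr rfl hneg, Finset.sum_neg_distrib] at jensen
  linarith

/-- Among sparse probability vectors with support of size at most `k`, the KL
divergence to a positive vector `p` (with total mass at most 1) is minimized by
renormalizing `p` on a set `T` of indices of the `k` largest entries of `p`,
and the minimal value is `-log (∑_{j∈T} p j)`. -/
theorem sparse_kl_projection (n k : ℕ) (hk1 : 1 ≤ k) (hkn : k ≤ n)
    (p : Fin n → ℝ) (hp : ∀ j, 0 < p j) (hpsum : ∑ j, p j ≤ 1)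
    (T : Finset (Fin n)) (hTcard : T.card = k)
    (hTtop : ∀ j ∈ T, ∀ j' ∉ T, p j' ≤ p j)
    (α : Fin n → ℝ)
    (hαT : ∀ j ∈ T, α j = p j / ∑ l ∈ T, p l)
    (hα0 : ∀ j ∉ T, α j = 0) :
    (∀ β : Fin n → ℝ, (∀ j, 0 ≤ β j) →
      ({j : Fin n | β j ≠ 0} : Set (Fin n)).ncard ≤ k → ∑ j, β j = 1 →
      ∑ j, α j * Real.log (α j / p j) ≤ ∑ j, β j * Real.log (β j / p j)) ∧
    ∑ j, α j * Real.log (α j / p j) = - Real.log (∑ j ∈ T, p j) := by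
  have hTne : T.Nonempty := Finset.card_pos.mp (by omega)
  set S := ∑ l ∈ T, p l with hSdef
  have hSpos : 0 < S := Finset.sum_pos (fun j _ => hp j) hTne
  -- value computation
  have hval : ∑ j, α j * Real.log (α j / p j) = - Real.log S := by
    rw [← Finset.sum_subset (Finset.subset_univ T)
      (fun j _ hj => by rw [hα0 j hj, zero_mul])]
    have hterm : ∀ j ∈ T, α j * Real.log (α j / p j) = p j / S * (- Real.log S) := by
      intro j hj
      rw [hαT j hj]
      congr 1
      have : p j / S / p j = S⁻¹ := by
        rw [div_div, mul_comm, ← div_div, div_self (hp j).ne', one_div]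
      rw [this, Real.log_inv]
    rw [Finset.sum_congr rfl hterm, ← Finset.sum_mul, ← Finset.sum_div, ← hSdef,
      div_self hSpos.ne']
    ring
  refine ⟨?_, hval⟩
  intro β hβ0 hβcard hβsum
  rw [hval]
  classical
  set B := Finset.univ.filter (fun j => β j ≠ 0) with hBdef
  have hsupp : ({j : Fin n | β j ≠ 0} : Set (Fin n)) = ↑B := by
    ext j; simp [hBdef]
  rw [hsupp, Set.ncard_coe_finset] at hβcard
  have hβB : ∀ j ∈ B, 0 < β j := by
    intro j hj
    have := (Finset.mem_filter.mp hj).2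
    exact lt_of_le_of_ne (hβ0 j) (Ne.symm this)
  have hsumB : ∑ j ∈ B, β j = 1 := by
    rw [hBdef, Finset.sum_filter_ne_zero, hβsum]
  have hBne : B.Nonempty := by
    by_contra h
    rw [Finset.not_nonempty_iff_eq_empty] at h
    rw [h, Finset.sum_empty] at hsumB
    norm_num at hsumB
  have hrhs : ∑ j, β j * Real.log (β j / p j) = ∑ j ∈ B, β j * Real.log (β j / p j) := by
    rw [← Finset.sum_subset (Finset.subset_univ B)
      (fun j _ hj => by
        have : β j = 0 := by
          by_contra h
          exact hj (Finset.mem_filter.mpr ⟨Finset.mem_univ j, h⟩)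
        rw [this, zero_mul])]
  rw [hrhs]
  have hBpos : 0 < ∑ j ∈ B, p j := Finset.sum_pos (fun j _ => hp j) hBne
  have hBS : ∑ j ∈ B, p j ≤ S :=
    sum_le_sum_top p hp T B (by omega) hTtop
  calc - Real.log S ≤ - Real.log (∑ j ∈ B, p j) := by
        have := Real.log_le_log hBpos hBS
        linarith
    _ ≤ ∑ j ∈ B, β j * Real.log (β j / p j) := gibbs_lower p hp B β hβB hsumB
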